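/- arXiv:hep-th/9308072 — 2 statements merged into one kernel-verified Lean document; each statement's English description precedes it below -/
import Mathlib

section
/- Let R, R' be Yang-Baxter operators on X, Y and U : X⊗Y → Y⊗X, S : Y⊗X → X⊗Y, T : Y⊗X → Y⊗X linear maps with U, S invertible. Define Q on (X⊕Y)^{⊗2} by Q|_{X⊗X}=R, Q|_{Y⊗Y}=R', Q(x⊗y)=U(x⊗y), Q(y⊗x)=S(y⊗x)+T(y⊗x). If the compatibility conditions (I)–(VI)' hold (U₁₂U₁₃R₂₃=R₂₃U₁₃U₁₂, R₁₂S₁₃S₂₃=S₂₃S₁₃R₁₂, S₁₂R₁₃U₂₃=U₂₃R₁₃S₁₂, T₁₂U₁₃R₂₃=U₂₃R₁₃T₁₂, R₁₂S₁₃T₂₃=S₂₃R₁₃T₁₂, R₁₂T₁₃R₂₃=T₂₃R₁₃T₁₂+S₂₃T₁₃U₁₂, and the mirror equations with R'), then Q satisfies the quantum Yang-Baxter equation. -/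
open TensorProduct LinearMap

section

variable {k : Type*} [Field k]

/-- The quantum Yang-Baxter (braid) relation for an operator on `V ⊗ V`. -/
def Braid {V : Type*} [AddCommGroup V] [Module k V]
    (Q : V ⊗[k] V →ₗ[k] V ⊗[k] V) : Prop :=
  Q.rTensor V ∘ₗ
      ((TensorProduct.assoc k V V V).symm.toLinearMap ∘ₗ Q.lTensor V ∘ₗ
        (TensorProduct.assoc k V V V).toLinearMap) ∘ₗ
      Q.rTensor V =
    ((TensorProduct.assoc k V V V).symm.toLinearMap ∘ₗ Q.lTensor V ∘ₗ
        (TensorProduct.assoc k V V V).toLinearMap) ∘ₗ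
      Q.rTensor V ∘ₗ
      ((TensorProduct.assoc k V V V).symm.toLinearMap ∘ₗ Q.lTensor V ∘ₗ
        (TensorProduct.assoc k V V V).toLinearMap)

variable {A B C D E : Type*} [AddCommGroup A] [Module k A] [AddCommGroup B] [Module k B]
  [AddCommGroup C] [Module k C] [AddCommGroup D] [Module k D] [AddCommGroup E] [Module k E]

/-- `f ⊗ 1`, acting on the first two factors of `(A ⊗ B) ⊗ E`. -/
noncomputable def one2 (f : A ⊗[k] B →ₗ[k] C ⊗[k] D) : (A ⊗[k] B) ⊗[k] E →ₗ[k] (C ⊗[k] D) ⊗[k] E :=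
  f.rTensor E

/-- `1 ⊗ f`, acting on the last two factors of `(E ⊗ A) ⊗ B`. -/
noncomputable def two3 (f : A ⊗[k] B →ₗ[k] C ⊗[k] D) : (E ⊗[k] A) ⊗[k] B →ₗ[k] (E ⊗[k] C) ⊗[k] D :=
  (TensorProduct.assoc k E C D).symm.toLinearMap ∘ₗ f.lTensor E ∘ₗ
    (TensorProduct.assoc k E A B).toLinearMap

end

section Conditions

variable {k : Type*} [Field k] {X Y : Type*}
  [AddCommGroup X] [Module k X] [AddCommGroup Y] [Module k Y]
  (R : X ⊗[k] X →ₗ[k] X ⊗[k] X) (R' : Y ⊗[k] Y →ₗ[k] Y ⊗[k] Y)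
  (U : X ⊗[k] Y →ₗ[k] Y ⊗[k] X) (S : Y ⊗[k] X →ₗ[k] X ⊗[k] Y)
  (T : Y ⊗[k] X →ₗ[k] Y ⊗[k] X)

/-- Condition (I): `(1⊗R)(U⊗1)(1⊗U) = (U⊗1)(1⊗U)(R⊗1)` on `X⊗X⊗Y`. -/
def CondI : Prop :=
  two3 R ∘ₗ one2 U ∘ₗ two3 U = one2 U ∘ₗ two3 U ∘ₗ one2 (E := Y) R

/-- Condition (I)': `(R'⊗1)(1⊗U)(U⊗1) = (1⊗U)(U⊗1)(1⊗R')` on `X⊗Y⊗Y`. -/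
def CondI' : Prop :=
  one2 R' ∘ₗ two3 U ∘ₗ one2 U = two3 U ∘ₗ one2 U ∘ₗ two3 (E := X) R'

/-- Condition (II): `(R⊗1)(1⊗S)(S⊗1) = (1⊗S)(S⊗1)(1⊗R)` on `Y⊗X⊗X`. -/
def CondII : Prop :=
  one2 R ∘ₗ two3 S ∘ₗ one2 S = two3 S ∘ₗ one2 S ∘ₗ two3 (E := Y) R

/-- Condition (II)': `(S⊗1)(1⊗S)(R'⊗1) = (1⊗R')(S⊗1)(1⊗S)` on `Y⊗Y⊗X`. -/
def CondII' : Prop :=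
  one2 S ∘ₗ two3 S ∘ₗ one2 (E := X) R' = two3 R' ∘ₗ one2 S ∘ₗ two3 S

/-- Condition (III): `(S⊗1)(1⊗R)(U⊗1) = (1⊗U)(R⊗1)(1⊗S)` on `X⊗Y⊗X`. -/
def CondIII : Prop :=
  one2 S ∘ₗ two3 R ∘ₗ one2 U = two3 U ∘ₗ one2 R ∘ₗ two3 (E := X) S

/-- Condition (III)': `(U⊗1)(1⊗R')(S⊗1) = (1⊗S)(R'⊗1)(1⊗U)` on `Y⊗X⊗Y`. -/
def CondIII' : Prop :=
  one2 U ∘ₗ two3 R' ∘ₗ one2 S = two3 S ∘ₗ one2 R' ∘ₗ two3 (E := Y) U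

/-- Condition (IV): `(T⊗1)(1⊗R)(U⊗1) = (1⊗R)(U⊗1)(1⊗T)` on `X⊗Y⊗X`. -/
def CondIV : Prop :=
  one2 T ∘ₗ two3 R ∘ₗ one2 U = two3 R ∘ₗ one2 U ∘ₗ two3 (E := X) T

/-- Condition (IV)': `(R'⊗1)(1⊗U)(T⊗1) = (1⊗T)(R'⊗1)(1⊗U)` on `Y⊗X⊗Y`. -/
def CondIV' : Prop :=
  one2 R' ∘ₗ two3 U ∘ₗ one2 T = two3 T ∘ₗ one2 R' ∘ₗ two3 (E := Y) U

/-- Condition (V): `(S⊗1)(1⊗R)(T⊗1) = (1⊗T)(S⊗1)(1⊗R)` on `Y⊗X⊗X`. -/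
def CondV : Prop :=
  one2 S ∘ₗ two3 R ∘ₗ one2 T = two3 T ∘ₗ one2 S ∘ₗ two3 (E := Y) R

/-- Condition (V)': `(T⊗1)(1⊗S)(R'⊗1) = (1⊗S)(R'⊗1)(1⊗T)` on `Y⊗Y⊗X`. -/
def CondV' : Prop :=
  one2 T ∘ₗ two3 S ∘ₗ one2 (E := X) R' = two3 S ∘ₗ one2 R' ∘ₗ two3 T

/-- Condition (VI): `(1⊗R)(T⊗1)(1⊗R) = (T⊗1)(1⊗R)(T⊗1) + (U⊗1)(1⊗T)(S⊗1)`
on `Y⊗X⊗X`. -/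
def CondVI : Prop :=
  two3 R ∘ₗ one2 T ∘ₗ two3 (E := Y) R =
    one2 T ∘ₗ two3 R ∘ₗ one2 T + one2 U ∘ₗ two3 T ∘ₗ one2 S

/-- Condition (VI)': `(R'⊗1)(1⊗T)(R'⊗1) = (1⊗T)(R'⊗1)(1⊗T) + (1⊗U)(T⊗1)(1⊗S)`
on `Y⊗Y⊗X`. -/
def CondVI' : Prop :=
  one2 R' ∘ₗ two3 T ∘ₗ one2 (E := X) R' =
    two3 T ∘ₗ one2 R' ∘ₗ two3 T + two3 U ∘ₗ one2 T ∘ₗ two3 S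

/-- `Q = R ⊕_{U,S,T} R'`, the generalized glueing, defined blockwise. -/
def IsGenGlue (Q : (X × Y) ⊗[k] (X × Y) →ₗ[k] (X × Y) ⊗[k] (X × Y)) : Prop :=
  (Q ∘ₗ TensorProduct.map (LinearMap.inl k X Y) (LinearMap.inl k X Y) =
      TensorProduct.map (LinearMap.inl k X Y) (LinearMap.inl k X Y) ∘ₗ R) ∧
  (Q ∘ₗ TensorProduct.map (LinearMap.inr k X Y) (LinearMap.inr k X Y) =
      TensorProduct.map (LinearMap.inr k X Y) (LinearMap.inr k X Y) ∘ₗ R') ∧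
  (Q ∘ₗ TensorProduct.map (LinearMap.inl k X Y) (LinearMap.inr k X Y) =
      TensorProduct.map (LinearMap.inr k X Y) (LinearMap.inl k X Y) ∘ₗ U) ∧
  (Q ∘ₗ TensorProduct.map (LinearMap.inr k X Y) (LinearMap.inl k X Y) =
      TensorProduct.map (LinearMap.inl k X Y) (LinearMap.inr k X Y) ∘ₗ S +
        TensorProduct.map (LinearMap.inr k X Y) (LinearMap.inl k X Y) ∘ₗ T)

end Conditions

section NatAux

variable {k : Type*} [Field k]
variable {A B C D A' B' C' D' C'' D'' E E' V : Type*}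
  [AddCommGroup A] [Module k A] [AddCommGroup B] [Module k B]
  [AddCommGroup C] [Module k C] [AddCommGroup D] [Module k D]
  [AddCommGroup A'] [Module k A'] [AddCommGroup B'] [Module k B']
  [AddCommGroup C'] [Module k C'] [AddCommGroup D'] [Module k D']
  [AddCommGroup C''] [Module k C''] [AddCommGroup D''] [Module k D'']
  [AddCommGroup E] [Module k E] [AddCommGroup E'] [Module k E']
  [AddCommGroup V] [Module k V]
  {f : A ⊗[k] B →ₗ[k] C ⊗[k] D}
  {a : A' →ₗ[k] A} {b : B' →ₗ[k] B}

lemma one2_nat {g : A' ⊗[k] B' →ₗ[k] C' ⊗[k] D'} {c : C' →ₗ[k] C} {d : D' →ₗ[k] D}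
    (h : f ∘ₗ TensorProduct.map a b = TensorProduct.map c d ∘ₗ g) (e : E' →ₗ[k] E) :
    one2 (E := E) f ∘ₗ TensorProduct.map (TensorProduct.map a b) e =
      TensorProduct.map (TensorProduct.map c d) e ∘ₗ one2 g := by
  apply TensorProduct.ext_threefold
  intro x y z
  have hx := LinearMap.congr_fun h (x ⊗ₜ[k] y)
  simp only [coe_comp, Function.comp_apply, TensorProduct.map_tmul] at hx
  simp [one2, hx]

lemma one2_nat' {g : A' ⊗[k] B' →ₗ[k] C' ⊗[k] D'} {c : C' →ₗ[k] C} {d : D' →ₗ[k] D}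
    (h : f ∘ₗ TensorProduct.map a b = TensorProduct.map c d ∘ₗ g) (e : E' →ₗ[k] E)
    (Z : V →ₗ[k] (A' ⊗[k] B') ⊗[k] E') :
    one2 (E := E) f ∘ₗ (TensorProduct.map (TensorProduct.map a b) e ∘ₗ Z) =
      TensorProduct.map (TensorProduct.map c d) e ∘ₗ (one2 g ∘ₗ Z) := by
  rw [← LinearMap.comp_assoc, one2_nat h e, LinearMap.comp_assoc]

lemma one2_nat₂ {g : A' ⊗[k] B' →ₗ[k] C' ⊗[k] D'} {g' : A' ⊗[k] B' →ₗ[k] C'' ⊗[k] D''}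
    {c : C' →ₗ[k] C} {d : D' →ₗ[k] D} {c' : C'' →ₗ[k] C} {d' : D'' →ₗ[k] D}
    (h : f ∘ₗ TensorProduct.map a b =
      TensorProduct.map c d ∘ₗ g + TensorProduct.map c' d' ∘ₗ g') (e : E' →ₗ[k] E) :
    one2 (E := E) f ∘ₗ TensorProduct.map (TensorProduct.map a b) e =
      TensorProduct.map (TensorProduct.map c d) e ∘ₗ one2 g +
        TensorProduct.map (TensorProduct.map c' d') e ∘ₗ one2 g' := by
  apply TensorProduct.ext_threefold
  intro x y z
  have hx := LinearMap.congr_fun h (x ⊗ₜ[k] y)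
  simp only [coe_comp, Function.comp_apply, TensorProduct.map_tmul, LinearMap.add_apply] at hx
  simp [one2, hx, TensorProduct.add_tmul]

lemma one2_nat₂' {g : A' ⊗[k] B' →ₗ[k] C' ⊗[k] D'} {g' : A' ⊗[k] B' →ₗ[k] C'' ⊗[k] D''}
    {c : C' →ₗ[k] C} {d : D' →ₗ[k] D} {c' : C'' →ₗ[k] C} {d' : D'' →ₗ[k] D}
    (h : f ∘ₗ TensorProduct.map a b =
      TensorProduct.map c d ∘ₗ g + TensorProduct.map c' d' ∘ₗ g') (e : E' →ₗ[k] E)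
    (Z : V →ₗ[k] (A' ⊗[k] B') ⊗[k] E') :
    one2 (E := E) f ∘ₗ (TensorProduct.map (TensorProduct.map a b) e ∘ₗ Z) =
      TensorProduct.map (TensorProduct.map c d) e ∘ₗ (one2 g ∘ₗ Z) +
        TensorProduct.map (TensorProduct.map c' d') e ∘ₗ (one2 g' ∘ₗ Z) := by
  rw [← LinearMap.comp_assoc, one2_nat₂ h e, add_comp, LinearMap.comp_assoc,
    LinearMap.comp_assoc]

lemma two3_nat {g : A' ⊗[k] B' →ₗ[k] C' ⊗[k] D'} {c : C' →ₗ[k] C} {d : D' →ₗ[k] D}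
    (h : f ∘ₗ TensorProduct.map a b = TensorProduct.map c d ∘ₗ g) (e : E' →ₗ[k] E) :
    two3 (E := E) f ∘ₗ TensorProduct.map (TensorProduct.map e a) b =
      TensorProduct.map (TensorProduct.map e c) d ∘ₗ two3 g := by
  apply TensorProduct.ext_threefold
  intro z x y
  have hx := LinearMap.congr_fun h (x ⊗ₜ[k] y)
  simp only [coe_comp, Function.comp_apply, TensorProduct.map_tmul] at hx
  simp [two3, hx, TensorProduct.map_map_assoc_symm]

lemma two3_nat' {g : A' ⊗[k] B' →ₗ[k] C' ⊗[k] D'} {c : C' →ₗ[k] C} {d : D' →ₗ[k] D}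
    (h : f ∘ₗ TensorProduct.map a b = TensorProduct.map c d ∘ₗ g) (e : E' →ₗ[k] E)
    (Z : V →ₗ[k] (E' ⊗[k] A') ⊗[k] B') :
    two3 (E := E) f ∘ₗ (TensorProduct.map (TensorProduct.map e a) b ∘ₗ Z) =
      TensorProduct.map (TensorProduct.map e c) d ∘ₗ (two3 g ∘ₗ Z) := by
  rw [← LinearMap.comp_assoc, two3_nat h e, LinearMap.comp_assoc]

lemma two3_nat₂ {g : A' ⊗[k] B' →ₗ[k] C' ⊗[k] D'} {g' : A' ⊗[k] B' →ₗ[k] C'' ⊗[k] D''}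
    {c : C' →ₗ[k] C} {d : D' →ₗ[k] D} {c' : C'' →ₗ[k] C} {d' : D'' →ₗ[k] D}
    (h : f ∘ₗ TensorProduct.map a b =
      TensorProduct.map c d ∘ₗ g + TensorProduct.map c' d' ∘ₗ g') (e : E' →ₗ[k] E) :
    two3 (E := E) f ∘ₗ TensorProduct.map (TensorProduct.map e a) b =
      TensorProduct.map (TensorProduct.map e c) d ∘ₗ two3 g +
        TensorProduct.map (TensorProduct.map e c') d' ∘ₗ two3 g' := by
  apply TensorProduct.ext_threefold
  intro z x y
  have hx := LinearMap.congr_fun h (x ⊗ₜ[k] y)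
  simp only [coe_comp, Function.comp_apply, TensorProduct.map_tmul, LinearMap.add_apply] at hx
  simp [two3, hx, TensorProduct.map_map_assoc_symm, TensorProduct.tmul_add]

lemma two3_nat₂' {g : A' ⊗[k] B' →ₗ[k] C' ⊗[k] D'} {g' : A' ⊗[k] B' →ₗ[k] C'' ⊗[k] D''}
    {c : C' →ₗ[k] C} {d : D' →ₗ[k] D} {c' : C'' →ₗ[k] C} {d' : D'' →ₗ[k] D}
    (h : f ∘ₗ TensorProduct.map a b =
      TensorProduct.map c d ∘ₗ g + TensorProduct.map c' d' ∘ₗ g') (e : E' →ₗ[k] E)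
    (Z : V →ₗ[k] (E' ⊗[k] A') ⊗[k] B') :
    two3 (E := E) f ∘ₗ (TensorProduct.map (TensorProduct.map e a) b ∘ₗ Z) =
      TensorProduct.map (TensorProduct.map e c) d ∘ₗ (two3 g ∘ₗ Z) +
        TensorProduct.map (TensorProduct.map e c') d' ∘ₗ (two3 g' ∘ₗ Z) := by
  rw [← LinearMap.comp_assoc, two3_nat₂ h e, add_comp, LinearMap.comp_assoc,
    LinearMap.comp_assoc]

end NatAux

section GlueExt

variable {k : Type*} [Field k] {X Y W : Type*}
  [AddCommGroup X] [Module k X] [AddCommGroup Y] [Module k Y]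
  [AddCommGroup W] [Module k W]

lemma glue_ext (L M : ((X × Y) ⊗[k] (X × Y)) ⊗[k] (X × Y) →ₗ[k] W)
    (hxxx : L ∘ₗ TensorProduct.map (TensorProduct.map (inl k X Y) (inl k X Y)) (inl k X Y) =
      M ∘ₗ TensorProduct.map (TensorProduct.map (inl k X Y) (inl k X Y)) (inl k X Y))
    (hxxy : L ∘ₗ TensorProduct.map (TensorProduct.map (inl k X Y) (inl k X Y)) (inr k X Y) =
      M ∘ₗ TensorProduct.map (TensorProduct.map (inl k X Y) (inl k X Y)) (inr k X Y))
    (hxyx : L ∘ₗ TensorProduct.map (TensorProduct.map (inl k X Y) (inr k X Y)) (inl k X Y) =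
      M ∘ₗ TensorProduct.map (TensorProduct.map (inl k X Y) (inr k X Y)) (inl k X Y))
    (hxyy : L ∘ₗ TensorProduct.map (TensorProduct.map (inl k X Y) (inr k X Y)) (inr k X Y) =
      M ∘ₗ TensorProduct.map (TensorProduct.map (inl k X Y) (inr k X Y)) (inr k X Y))
    (hyxx : L ∘ₗ TensorProduct.map (TensorProduct.map (inr k X Y) (inl k X Y)) (inl k X Y) =
      M ∘ₗ TensorProduct.map (TensorProduct.map (inr k X Y) (inl k X Y)) (inl k X Y))
    (hyxy : L ∘ₗ TensorProduct.map (TensorProduct.map (inr k X Y) (inl k X Y)) (inr k X Y) =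
      M ∘ₗ TensorProduct.map (TensorProduct.map (inr k X Y) (inl k X Y)) (inr k X Y))
    (hyyx : L ∘ₗ TensorProduct.map (TensorProduct.map (inr k X Y) (inr k X Y)) (inl k X Y) =
      M ∘ₗ TensorProduct.map (TensorProduct.map (inr k X Y) (inr k X Y)) (inl k X Y))
    (hyyy : L ∘ₗ TensorProduct.map (TensorProduct.map (inr k X Y) (inr k X Y)) (inr k X Y) =
      M ∘ₗ TensorProduct.map (TensorProduct.map (inr k X Y) (inr k X Y)) (inr k X Y)) :
    L = M := by
  have hid : inl k X Y ∘ₗ fst k X Y + inr k X Y ∘ₗ snd k X Y = LinearMap.id := by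
    apply LinearMap.ext
    intro p
    simp
  have key : ∀ (N : ((X × Y) ⊗[k] (X × Y)) ⊗[k] (X × Y) →ₗ[k] W),
      N =
        (N ∘ₗ TensorProduct.map (TensorProduct.map (inl k X Y) (inl k X Y)) (inl k X Y)) ∘ₗ
          TensorProduct.map (TensorProduct.map (fst k X Y) (fst k X Y)) (fst k X Y) +
        (N ∘ₗ TensorProduct.map (TensorProduct.map (inl k X Y) (inl k X Y)) (inr k X Y)) ∘ₗ
          TensorProduct.map (TensorProduct.map (fst k X Y) (fst k X Y)) (snd k X Y) +
        (N ∘ₗ TensorProduct.map (TensorProduct.map (inl k X Y) (inr k X Y)) (inl k X Y)) ∘ₗ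
          TensorProduct.map (TensorProduct.map (fst k X Y) (snd k X Y)) (fst k X Y) +
        (N ∘ₗ TensorProduct.map (TensorProduct.map (inl k X Y) (inr k X Y)) (inr k X Y)) ∘ₗ
          TensorProduct.map (TensorProduct.map (fst k X Y) (snd k X Y)) (snd k X Y) +
        (N ∘ₗ TensorProduct.map (TensorProduct.map (inr k X Y) (inl k X Y)) (inl k X Y)) ∘ₗ
          TensorProduct.map (TensorProduct.map (snd k X Y) (fst k X Y)) (fst k X Y) +
        (N ∘ₗ TensorProduct.map (TensorProduct.map (inr k X Y) (inl k X Y)) (inr k X Y)) ∘ₗ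
          TensorProduct.map (TensorProduct.map (snd k X Y) (fst k X Y)) (snd k X Y) +
        (N ∘ₗ TensorProduct.map (TensorProduct.map (inr k X Y) (inr k X Y)) (inl k X Y)) ∘ₗ
          TensorProduct.map (TensorProduct.map (snd k X Y) (snd k X Y)) (fst k X Y) +
        (N ∘ₗ TensorProduct.map (TensorProduct.map (inr k X Y) (inr k X Y)) (inr k X Y)) ∘ₗ
          TensorProduct.map (TensorProduct.map (snd k X Y) (snd k X Y)) (snd k X Y) := by
    intro N
    have hID : (LinearMap.id : ((X × Y) ⊗[k] (X × Y)) ⊗[k] (X × Y) →ₗ[k]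
        ((X × Y) ⊗[k] (X × Y)) ⊗[k] (X × Y)) =
        TensorProduct.map (TensorProduct.map (inl k X Y) (inl k X Y)) (inl k X Y) ∘ₗ
          TensorProduct.map (TensorProduct.map (fst k X Y) (fst k X Y)) (fst k X Y) +
        TensorProduct.map (TensorProduct.map (inl k X Y) (inl k X Y)) (inr k X Y) ∘ₗ
          TensorProduct.map (TensorProduct.map (fst k X Y) (fst k X Y)) (snd k X Y) +
        TensorProduct.map (TensorProduct.map (inl k X Y) (inr k X Y)) (inl k X Y) ∘ₗ
          TensorProduct.map (TensorProduct.map (fst k X Y) (snd k X Y)) (fst k X Y) +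
        TensorProduct.map (TensorProduct.map (inl k X Y) (inr k X Y)) (inr k X Y) ∘ₗ
          TensorProduct.map (TensorProduct.map (fst k X Y) (snd k X Y)) (snd k X Y) +
        TensorProduct.map (TensorProduct.map (inr k X Y) (inl k X Y)) (inl k X Y) ∘ₗ
          TensorProduct.map (TensorProduct.map (snd k X Y) (fst k X Y)) (fst k X Y) +
        TensorProduct.map (TensorProduct.map (inr k X Y) (inl k X Y)) (inr k X Y) ∘ₗ
          TensorProduct.map (TensorProduct.map (snd k X Y) (fst k X Y)) (snd k X Y) +
        TensorProduct.map (TensorProduct.map (inr k X Y) (inr k X Y)) (inl k X Y) ∘ₗ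
          TensorProduct.map (TensorProduct.map (snd k X Y) (snd k X Y)) (fst k X Y) +
        TensorProduct.map (TensorProduct.map (inr k X Y) (inr k X Y)) (inr k X Y) ∘ₗ
          TensorProduct.map (TensorProduct.map (snd k X Y) (snd k X Y)) (snd k X Y) := by
      have h0 : (LinearMap.id : ((X × Y) ⊗[k] (X × Y)) ⊗[k] (X × Y) →ₗ[k]
          ((X × Y) ⊗[k] (X × Y)) ⊗[k] (X × Y)) =
          TensorProduct.map
            (TensorProduct.map (inl k X Y ∘ₗ fst k X Y + inr k X Y ∘ₗ snd k X Y)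
              (inl k X Y ∘ₗ fst k X Y + inr k X Y ∘ₗ snd k X Y))
            (inl k X Y ∘ₗ fst k X Y + inr k X Y ∘ₗ snd k X Y) := by
        rw [hid]
        simp [TensorProduct.map_id]
      rw [h0]
      simp only [TensorProduct.map_add_left, TensorProduct.map_add_right,
        TensorProduct.map_comp]
      abel
    conv_lhs => rw [← LinearMap.comp_id N, hID]
    simp only [LinearMap.comp_add, ← LinearMap.comp_assoc]
  rw [key L, key M, hxxx, hxxy, hxyx, hxyy, hyxx, hyxy, hyyx, hyyy]

end GlueExt

set_option maxHeartbeats 2000000 in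
/-- if the compatibility conditions (I)–(VI)' hold for
`R, R', U, S, T` (with `R, R'` Yang-Baxter operators and `U, S` invertible),
then `Q = R ⊕_{U,S,T} R'` satisfies the quantum Yang-Baxter equation. -/
theorem stmt4 {k : Type*} [Field k] {X Y : Type*}
    [AddCommGroup X] [Module k X] [AddCommGroup Y] [Module k Y]
    (R : X ⊗[k] X →ₗ[k] X ⊗[k] X) (R' : Y ⊗[k] Y →ₗ[k] Y ⊗[k] Y)
    (U : X ⊗[k] Y →ₗ[k] Y ⊗[k] X) (S : Y ⊗[k] X →ₗ[k] X ⊗[k] Y)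
    (T : Y ⊗[k] X →ₗ[k] Y ⊗[k] X)
    (hRbij : Function.Bijective R) (hR'bij : Function.Bijective R')
    (hUbij : Function.Bijective U) (hSbij : Function.Bijective S)
    (hRbraid : Braid R) (hR'braid : Braid R')
    (h1 : CondI R U) (h1' : CondI' R' U)
    (h2 : CondII R S) (h2' : CondII' R' S)
    (h3 : CondIII R U S) (h3' : CondIII' R' U S)
    (h4 : CondIV R U T) (h4' : CondIV' R' U T)
    (h5 : CondV R S T) (h5' : CondV' R' S T)
    (h6 : CondVI R U S T) (h6' : CondVI' R' U S T)
    (Q : (X × Y) ⊗[k] (X × Y) →ₗ[k] (X × Y) ⊗[k] (X × Y))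
    (hQ : IsGenGlue R R' U S T Q) :
    Braid Q := by
  obtain ⟨hXX, hYY, hXY, hYX⟩ := hQ
  replace hRbraid : one2 R ∘ₗ two3 (E := X) R ∘ₗ one2 R =
      two3 R ∘ₗ one2 R ∘ₗ two3 R := hRbraid
  replace hR'braid : one2 R' ∘ₗ two3 (E := Y) R' ∘ₗ one2 R' =
      two3 R' ∘ₗ one2 R' ∘ₗ two3 R' := hR'braid
  replace h1 : two3 R ∘ₗ one2 U ∘ₗ two3 U = one2 U ∘ₗ two3 U ∘ₗ one2 (E := Y) R := h1
  replace h1' : one2 R' ∘ₗ two3 U ∘ₗ one2 U = two3 U ∘ₗ one2 U ∘ₗ two3 (E := X) R' := h1'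
  replace h2 : one2 R ∘ₗ two3 S ∘ₗ one2 S = two3 S ∘ₗ one2 S ∘ₗ two3 (E := Y) R := h2
  replace h2' : one2 S ∘ₗ two3 S ∘ₗ one2 (E := X) R' = two3 R' ∘ₗ one2 S ∘ₗ two3 S := h2'
  replace h3 : one2 S ∘ₗ two3 R ∘ₗ one2 U = two3 U ∘ₗ one2 R ∘ₗ two3 (E := X) S := h3
  replace h3' : one2 U ∘ₗ two3 R' ∘ₗ one2 S = two3 S ∘ₗ one2 R' ∘ₗ two3 (E := Y) U := h3'
  replace h4 : one2 T ∘ₗ two3 R ∘ₗ one2 U = two3 R ∘ₗ one2 U ∘ₗ two3 (E := X) T := h4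
  replace h4' : one2 R' ∘ₗ two3 U ∘ₗ one2 T = two3 T ∘ₗ one2 R' ∘ₗ two3 (E := Y) U := h4'
  replace h5 : one2 S ∘ₗ two3 R ∘ₗ one2 T = two3 T ∘ₗ one2 S ∘ₗ two3 (E := Y) R := h5
  replace h5' : one2 T ∘ₗ two3 S ∘ₗ one2 (E := X) R' = two3 S ∘ₗ one2 R' ∘ₗ two3 T := h5'
  replace h6 : two3 R ∘ₗ one2 T ∘ₗ two3 (E := Y) R =
      one2 T ∘ₗ two3 R ∘ₗ one2 T + one2 U ∘ₗ two3 T ∘ₗ one2 S := h6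
  replace h6' : one2 R' ∘ₗ two3 T ∘ₗ one2 (E := X) R' =
      two3 T ∘ₗ one2 R' ∘ₗ two3 T + two3 U ∘ₗ one2 T ∘ₗ two3 S := h6'
  show one2 Q ∘ₗ two3 (E := X × Y) Q ∘ₗ one2 Q = two3 (E := X × Y) Q ∘ₗ one2 Q ∘ₗ two3 Q
  refine glue_ext (W := ((X × Y) ⊗[k] (X × Y)) ⊗[k] (X × Y)) _ _ ?_ ?_ ?_ ?_ ?_ ?_ ?_ ?_
  -- XXX
  · simp only [LinearMap.comp_assoc]
    simp only [one2_nat hXX, one2_nat' hXX, two3_nat hXX, two3_nat' hXX]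
    rw [hRbraid]
  -- XXY
  · simp only [LinearMap.comp_assoc]
    simp only [one2_nat hXX, one2_nat' hXX, one2_nat hXY, one2_nat' hXY,
      two3_nat hXX, two3_nat' hXX, two3_nat hXY, two3_nat' hXY]
    rw [h1]
  -- XYX
  · simp only [LinearMap.comp_assoc]
    simp only [one2_nat hXX, one2_nat' hXX, one2_nat hXY, one2_nat' hXY,
      one2_nat₂ hYX, one2_nat₂' hYX,
      two3_nat hXX, two3_nat' hXX, two3_nat hXY, two3_nat' hXY,
      two3_nat₂ hYX, two3_nat₂' hYX, LinearMap.comp_add]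
    rw [h3, h4]
  -- XYY
  · simp only [LinearMap.comp_assoc]
    simp only [one2_nat hYY, one2_nat' hYY, one2_nat hXY, one2_nat' hXY,
      two3_nat hYY, two3_nat' hYY, two3_nat hXY, two3_nat' hXY]
    rw [h1']
  -- YXX
  · simp only [LinearMap.comp_assoc]
    simp only [one2_nat hXX, one2_nat' hXX, one2_nat hXY, one2_nat' hXY,
      one2_nat₂ hYX, one2_nat₂' hYX,
      two3_nat hXX, two3_nat' hXX, two3_nat hXY, two3_nat' hXY,
      two3_nat₂ hYX, two3_nat₂' hYX, LinearMap.comp_add]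
    rw [h2, h5, h6]
    simp only [LinearMap.comp_add]
    abel
  -- YXY
  · simp only [LinearMap.comp_assoc]
    simp only [one2_nat hYY, one2_nat' hYY, one2_nat hXY, one2_nat' hXY,
      one2_nat₂ hYX, one2_nat₂' hYX,
      two3_nat hYY, two3_nat' hYY, two3_nat hXY, two3_nat' hXY,
      two3_nat₂ hYX, two3_nat₂' hYX, LinearMap.comp_add]
    rw [h3', h4']
  -- YYX
  · simp only [LinearMap.comp_assoc]
    simp only [one2_nat hYY, one2_nat' hYY, one2_nat hXY, one2_nat' hXY,
      one2_nat₂ hYX, one2_nat₂' hYX,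
      two3_nat hYY, two3_nat' hYY, two3_nat hXY, two3_nat' hXY,
      two3_nat₂ hYX, two3_nat₂' hYX, LinearMap.comp_add]
    rw [h2', h5', h6']
    simp only [LinearMap.comp_add]
    abel
  -- YYY
  · simp only [LinearMap.comp_assoc]
    simp only [one2_nat hYY, one2_nat' hYY, two3_nat hYY, two3_nat' hYY]
    rw [hR'braid]
end

section
/- Setting b = c = 0 induces a well-defined bialgebra surjection A(R ⊕_q R') → A(R) ⊗ A(R'), where blocks a, d of the glued quantum matrix map to the generators of A(R) and A(R') respectively. -/
open scoped TensorProduct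

section

variable {k : Type*} [Field k] {ι : Type*} [Fintype ι] [DecidableEq ι]

/-- `R₁₂ = R ⊗ 1` as a matrix on the threefold tensor product. -/
def pos12 (M : Matrix (ι × ι) (ι × ι) k) : Matrix (ι × ι × ι) (ι × ι × ι) k :=
  fun x y => M (x.1, x.2.1) (y.1, y.2.1) * (if x.2.2 = y.2.2 then 1 else 0)

/-- `R₁₃`, acting on the first and third tensor factors. -/
def pos13 (M : Matrix (ι × ι) (ι × ι) k) : Matrix (ι × ι × ι) (ι × ι × ι) k :=
  fun x y => M (x.1, x.2.2) (y.1, y.2.2) * (if x.2.1 = y.2.1 then 1 else 0)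

/-- `R₂₃ = 1 ⊗ R` as a matrix on the threefold tensor product. -/
def pos23 (M : Matrix (ι × ι) (ι × ι) k) : Matrix (ι × ι × ι) (ι × ι × ι) k :=
  fun x y => M (x.2.1, x.2.2) (y.2.1, y.2.2) * (if x.1 = y.1 then 1 else 0)

/-- The quantum Yang-Baxter equation `R₁₂R₁₃R₂₃ = R₂₃R₁₃R₁₂` in matrix form. -/
def MatrixQYBE (M : Matrix (ι × ι) (ι × ι) k) : Prop :=
  pos12 M * pos13 M * pos23 M = pos23 M * pos13 M * pos12 M

/-- The flip matrix `P(x⊗y) = y⊗x`. -/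
def flipMat' : Matrix (ι × ι) (ι × ι) k :=
  fun p r => if p.1 = r.2 ∧ p.2 = r.1 then 1 else 0

/-- `M` is the matrix of a `q`-Hecke Yang-Baxter operator: it satisfies the
QYBE, is invertible, and its braiding `Ř = P∘M` satisfies `(Ř−q)(Ř+q⁻¹)=0`. -/
def IsHeckeYB (q : k) (M : Matrix (ι × ι) (ι × ι) k) : Prop :=
  MatrixQYBE M ∧ IsUnit M ∧
    (flipMat' * M - q • (1 : Matrix (ι × ι) (ι × ι) k)) *
      (flipMat' * M + q⁻¹ • (1 : Matrix (ι × ι) (ι × ι) k)) = 0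

end

/-- The glued R-matrix `R ⊕_q R'` (in numeric R-matrix form, with blocks
`R`, `1`, `(q−q⁻¹)P`, `1`, `R'` as in the paper). -/
def glueRmat {k : Type*} [Field k] (q : k) {α β : Type*} [DecidableEq α] [DecidableEq β]
    (R : Matrix (α × α) (α × α) k) (R' : Matrix (β × β) (β × β) k) :
    Matrix ((α ⊕ β) × (α ⊕ β)) ((α ⊕ β) × (α ⊕ β)) k :=
  fun p r =>
    match p, r with
    | (.inl i, .inl k'), (.inl j, .inl l) => R (i, k') (j, l)
    | (.inr i, .inr k'), (.inr j, .inr l) => R' (i, k') (j, l)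
    | (.inl i, .inr k'), (.inl j, .inr l) => if i = j ∧ k' = l then 1 else 0
    | (.inr i, .inl k'), (.inr j, .inl l) => if i = j ∧ k' = l then 1 else 0
    | (.inl i, .inr k'), (.inr j, .inl l) => if i = l ∧ k' = j then q - q⁻¹ else 0
    | _, _ => 0

/-- The FRT relations of the quantum matrix bialgebra `A(R)`. -/
inductive FRTRel (k : Type*) [Field k] {α : Type*} [Fintype α]
    (R : Matrix (α × α) (α × α) k) :
    FreeAlgebra k (α × α) → FreeAlgebra k (α × α) → Prop
  | frt (i k' : α) (j l : α) :
      FRTRel k R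
        (∑ a : α, ∑ b : α,
          R (i, k') (a, b) • (FreeAlgebra.ι k (a, j) * FreeAlgebra.ι k (b, l)))
        (∑ a : α, ∑ b : α,
          R (a, b) (j, l) • (FreeAlgebra.ι k (k', b) * FreeAlgebra.ι k (i, a)))

/-- The FRT bialgebra `A(R)` as an algebra. -/
abbrev FRTAlg (k : Type*) [Field k] {α : Type*} [Fintype α]
    (R : Matrix (α × α) (α × α) k) :=
  RingQuot (FRTRel k R)

/-- The generator `t^i_j` of `A(R)`. -/
noncomputable def frtGen (k : Type*) [Field k] {α : Type*} [Fintype α]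
    (R : Matrix (α × α) (α × α) k) (i j : α) : FRTAlg k R :=
  RingQuot.mkAlgHom k (FRTRel k R) (FreeAlgebra.ι k (i, j))


namespace Stmt16Aux

theorem sum_comm4 {M : Type*} [AddCommMonoid M] {α β γ δ : Type*}
    [Fintype α] [Fintype β] [Fintype γ] [Fintype δ] (f : α → β → γ → δ → M) :
    ∑ a : α, ∑ b : β, ∑ c : γ, ∑ d : δ, f a b c d
      = ∑ c : γ, ∑ d : δ, ∑ a : α, ∑ b : β, f a b c d := by
  have h1 : (∑ a : α, ∑ b : β, ∑ c : γ, ∑ d : δ, f a b c d)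
      = ∑ p : α × β, ∑ q : γ × δ, f p.1 p.2 q.1 q.2 := by
    simp [Fintype.sum_prod_type]
  have h2 : (∑ c : γ, ∑ d : δ, ∑ a : α, ∑ b : β, f a b c d)
      = ∑ q : γ × δ, ∑ p : α × β, f p.1 p.2 q.1 q.2 := by
    simp [Fintype.sum_prod_type]
  rw [h1, h2, Finset.sum_comm]

theorem sum_perm4 {M : Type*} [AddCommMonoid M] {α : Type*} [Fintype α]
    (F : α → α → α → α → M) :
    ∑ c : α, ∑ d : α, ∑ a : α, ∑ b : α, F a b c d
      = ∑ c : α, ∑ d : α, ∑ a : α, ∑ b : α, F d c a b := by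
  have h1 : (∑ c : α, ∑ d : α, ∑ a : α, ∑ b : α, F a b c d)
      = ∑ p : (α × α) × α × α, F p.2.1 p.2.2 p.1.1 p.1.2 := by
    simp [Fintype.sum_prod_type]
  have h2 : (∑ c : α, ∑ d : α, ∑ a : α, ∑ b : α, F d c a b)
      = ∑ p : (α × α) × α × α, F p.1.2 p.1.1 p.2.1 p.2.2 := by
    simp [Fintype.sum_prod_type]
  rw [h1, h2]
  exact Fintype.sum_equiv
    ⟨fun p => ((p.2.2, p.2.1), p.1), fun p => (p.2, (p.1.2, p.1.1)),
      fun p => rfl, fun p => rfl⟩ _ _ (fun p => rfl)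

variable {k : Type*} [Field k] {α : Type*} [Fintype α] (R : Matrix (α × α) (α × α) k)

theorem frt_rel (i k' j l : α) :
    ∑ a : α, ∑ b : α, R (i, k') (a, b) • (frtGen k R a j * frtGen k R b l)
      = ∑ a : α, ∑ b : α, R (a, b) (j, l) • (frtGen k R k' b * frtGen k R i a) := by
  have h := RingQuot.mkAlgHom_rel (S := k) (FRTRel.frt (k := k) (R := R) i k' j l)
  simpa only [map_sum, map_smul, map_mul, frtGen] using h

noncomputable def frtLift {B : Type*} [Semiring B] [Algebra k B] (φ : α → α → B)
    (h : ∀ i k' j l : α,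
      ∑ a : α, ∑ b : α, R (i, k') (a, b) • (φ a j * φ b l)
        = ∑ a : α, ∑ b : α, R (a, b) (j, l) • (φ k' b * φ i a)) :
    FRTAlg k R →ₐ[k] B :=
  RingQuot.liftAlgHom k ⟨FreeAlgebra.lift k (fun p => φ p.1 p.2), by
    intro x y hxy
    induction hxy with
    | frt i k' j l =>
      simpa only [map_sum, map_smul, map_mul, FreeAlgebra.lift_ι_apply] using h i k' j l⟩

theorem frtLift_gen {B : Type*} [Semiring B] [Algebra k B] (φ : α → α → B) (h) (i j : α) :
    frtLift R φ h (frtGen k R i j) = φ i j := by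
  simp [frtLift, frtGen, RingQuot.liftAlgHom_mkAlgHom_apply]

theorem frt_hom_ext {B : Type*} [Semiring B] [Algebra k B]
    {F G : FRTAlg k R →ₐ[k] B}
    (h : ∀ i j : α, F (frtGen k R i j) = G (frtGen k R i j)) : F = G := by
  have key : F.comp (RingQuot.mkAlgHom k (FRTRel k R))
      = G.comp (RingQuot.mkAlgHom k (FRTRel k R)) :=
    FreeAlgebra.hom_ext (funext fun p => by simpa [frtGen] using h p.1 p.2)
  refine AlgHom.ext fun x => ?_
  obtain ⟨y, rfl⟩ := RingQuot.mkAlgHom_surjective k (FRTRel k R) x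
  exact DFunLike.congr_fun key y

theorem comul_rel (i k' j l : α) :
    ∑ a : α, ∑ b : α, R (i, k') (a, b) •
        ((∑ c : α, frtGen k R a c ⊗ₜ[k] frtGen k R c j) *
          (∑ d : α, frtGen k R b d ⊗ₜ[k] frtGen k R d l))
      = ∑ a : α, ∑ b : α, R (a, b) (j, l) •
        ((∑ c : α, frtGen k R k' c ⊗ₜ[k] frtGen k R c b) *
          (∑ d : α, frtGen k R i d ⊗ₜ[k] frtGen k R d a)) := by
  set t := frtGen k R with ht
  calc
    ∑ a : α, ∑ b : α, R (i, k') (a, b) •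
        ((∑ c : α, t a c ⊗ₜ[k] t c j) * (∑ d : α, t b d ⊗ₜ[k] t d l))
        = ∑ a : α, ∑ b : α, ∑ c : α, ∑ d : α,
            R (i, k') (a, b) • ((t a c * t b d) ⊗ₜ[k] (t c j * t d l)) := by
          simp only [Finset.sum_mul_sum, Algebra.TensorProduct.tmul_mul_tmul, Finset.smul_sum]
    _ = ∑ c : α, ∑ d : α, ∑ a : α, ∑ b : α,
            R (i, k') (a, b) • ((t a c * t b d) ⊗ₜ[k] (t c j * t d l)) := sum_comm4 _
    _ = ∑ c : α, ∑ d : α,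
            (∑ a : α, ∑ b : α, R (i, k') (a, b) • (t a c * t b d)) ⊗ₜ[k] (t c j * t d l) := by
          simp only [TensorProduct.smul_tmul', TensorProduct.sum_tmul]
    _ = ∑ c : α, ∑ d : α,
            (∑ a : α, ∑ b : α, R (a, b) (c, d) • (t k' b * t i a)) ⊗ₜ[k] (t c j * t d l) := by
          refine Finset.sum_congr rfl fun c _ => Finset.sum_congr rfl fun d _ => ?_
          rw [frt_rel R i k' c d]
    _ = ∑ c : α, ∑ d : α, ∑ a : α, ∑ b : α,
            R (a, b) (c, d) • ((t k' b * t i a) ⊗ₜ[k] (t c j * t d l)) := by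
          simp only [TensorProduct.smul_tmul', TensorProduct.sum_tmul]
    _ = ∑ c : α, ∑ d : α, ∑ a : α, ∑ b : α,
            R (d, c) (a, b) • ((t k' c * t i d) ⊗ₜ[k] (t a j * t b l)) :=
          sum_perm4 (fun a b c d => R (a, b) (c, d) • ((t k' b * t i a) ⊗ₜ[k] (t c j * t d l)))
    _ = ∑ c : α, ∑ d : α,
            (t k' c * t i d) ⊗ₜ[k] (∑ a : α, ∑ b : α, R (d, c) (a, b) • (t a j * t b l)) := by
          simp only [TensorProduct.tmul_sum, TensorProduct.tmul_smul]
    _ = ∑ c : α, ∑ d : α,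
            (t k' c * t i d) ⊗ₜ[k] (∑ a : α, ∑ b : α, R (a, b) (j, l) • (t c b * t d a)) := by
          refine Finset.sum_congr rfl fun c _ => Finset.sum_congr rfl fun d _ => ?_
          rw [frt_rel R d c j l]
    _ = ∑ c : α, ∑ d : α, ∑ a : α, ∑ b : α,
            R (a, b) (j, l) • ((t k' c * t i d) ⊗ₜ[k] (t c b * t d a)) := by
          simp only [TensorProduct.tmul_sum, TensorProduct.tmul_smul]
    _ = ∑ a : α, ∑ b : α, ∑ c : α, ∑ d : α,
            R (a, b) (j, l) • ((t k' c * t i d) ⊗ₜ[k] (t c b * t d a)) := (sum_comm4 _).symm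
    _ = ∑ a : α, ∑ b : α, R (a, b) (j, l) •
            ((∑ c : α, t k' c ⊗ₜ[k] t c b) * (∑ d : α, t i d ⊗ₜ[k] t d a)) := by
          simp only [Finset.sum_mul_sum, Algebra.TensorProduct.tmul_mul_tmul, Finset.smul_sum]

noncomputable def frtComul : FRTAlg k R →ₐ[k] FRTAlg k R ⊗[k] FRTAlg k R :=
  frtLift R (fun i j => ∑ a : α, frtGen k R i a ⊗ₜ[k] frtGen k R a j) (comul_rel R)

theorem frtComul_gen (i j : α) :
    frtComul R (frtGen k R i j) = ∑ a : α, frtGen k R i a ⊗ₜ[k] frtGen k R a j :=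
  frtLift_gen R _ _ i j

noncomputable def frtCounit [DecidableEq α] : FRTAlg k R →ₐ[k] k :=
  frtLift R (fun i j => if i = j then 1 else 0) (by
    intro i k' j l
    simp [ite_mul, mul_ite, smul_eq_mul, Finset.sum_ite_eq, Finset.sum_ite_eq'])

theorem frtCounit_gen [DecidableEq α] (i j : α) :
    frtCounit R (frtGen k R i j) = if i = j then 1 else 0 :=
  frtLift_gen R _ _ i j

section Glue

variable (q : k) {m n : ℕ}
variable (R : Matrix ((Fin m) × (Fin m)) ((Fin m) × (Fin m)) k)
variable (R' : Matrix ((Fin n) × (Fin n)) ((Fin n) × (Fin n)) k)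

noncomputable def uu (i j : Fin m) : FRTAlg k R ⊗[k] FRTAlg k R' :=
  frtGen k R i j ⊗ₜ[k] 1

noncomputable def vv (i j : Fin n) : FRTAlg k R ⊗[k] FRTAlg k R' :=
  1 ⊗ₜ[k] frtGen k R' i j

noncomputable def phi : (Fin m ⊕ Fin n) → (Fin m ⊕ Fin n) → FRTAlg k R ⊗[k] FRTAlg k R'
  | .inl i, .inl j => uu R R' i j
  | .inr i, .inr j => vv R R' i j
  | _, _ => 0

@[simp] theorem phi_ll (i j : Fin m) : phi R R' (.inl i) (.inl j) = uu R R' i j := rfl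
@[simp] theorem phi_rr (i j : Fin n) : phi R R' (.inr i) (.inr j) = vv R R' i j := rfl
@[simp] theorem phi_lr (i : Fin m) (j : Fin n) : phi R R' (.inl i) (.inr j) = 0 := rfl
@[simp] theorem phi_rl (i : Fin n) (j : Fin m) : phi R R' (.inr i) (.inl j) = 0 := rfl

@[simp] theorem glueRmat_inlinlinlinl (i : Fin m) (k' : Fin m) (j : Fin m) (l : Fin m) :
    glueRmat q R R' (.inl i, .inl k') (.inl j, .inl l) = R (i, k') (j, l) := rfl
@[simp] theorem glueRmat_inlinlinlinr (i : Fin m) (k' : Fin m) (j : Fin m) (l : Fin n) :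
    glueRmat q R R' (.inl i, .inl k') (.inl j, .inr l) = 0 := rfl
@[simp] theorem glueRmat_inlinlinrinl (i : Fin m) (k' : Fin m) (j : Fin n) (l : Fin m) :
    glueRmat q R R' (.inl i, .inl k') (.inr j, .inl l) = 0 := rfl
@[simp] theorem glueRmat_inlinlinrinr (i : Fin m) (k' : Fin m) (j : Fin n) (l : Fin n) :
    glueRmat q R R' (.inl i, .inl k') (.inr j, .inr l) = 0 := rfl
@[simp] theorem glueRmat_inlinrinlinl (i : Fin m) (k' : Fin n) (j : Fin m) (l : Fin m) :
    glueRmat q R R' (.inl i, .inr k') (.inl j, .inl l) = 0 := rfl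
@[simp] theorem glueRmat_inlinrinlinr (i : Fin m) (k' : Fin n) (j : Fin m) (l : Fin n) :
    glueRmat q R R' (.inl i, .inr k') (.inl j, .inr l) = if i = j ∧ k' = l then 1 else 0 := rfl
@[simp] theorem glueRmat_inlinrinrinl (i : Fin m) (k' : Fin n) (j : Fin n) (l : Fin m) :
    glueRmat q R R' (.inl i, .inr k') (.inr j, .inl l) = if i = l ∧ k' = j then q - q⁻¹ else 0 := rfl
@[simp] theorem glueRmat_inlinrinrinr (i : Fin m) (k' : Fin n) (j : Fin n) (l : Fin n) :
    glueRmat q R R' (.inl i, .inr k') (.inr j, .inr l) = 0 := rfl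
@[simp] theorem glueRmat_inrinlinlinl (i : Fin n) (k' : Fin m) (j : Fin m) (l : Fin m) :
    glueRmat q R R' (.inr i, .inl k') (.inl j, .inl l) = 0 := rfl
@[simp] theorem glueRmat_inrinlinlinr (i : Fin n) (k' : Fin m) (j : Fin m) (l : Fin n) :
    glueRmat q R R' (.inr i, .inl k') (.inl j, .inr l) = 0 := rfl
@[simp] theorem glueRmat_inrinlinrinl (i : Fin n) (k' : Fin m) (j : Fin n) (l : Fin m) :
    glueRmat q R R' (.inr i, .inl k') (.inr j, .inl l) = if i = j ∧ k' = l then 1 else 0 := rfl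
@[simp] theorem glueRmat_inrinlinrinr (i : Fin n) (k' : Fin m) (j : Fin n) (l : Fin n) :
    glueRmat q R R' (.inr i, .inl k') (.inr j, .inr l) = 0 := rfl
@[simp] theorem glueRmat_inrinrinlinl (i : Fin n) (k' : Fin n) (j : Fin m) (l : Fin m) :
    glueRmat q R R' (.inr i, .inr k') (.inl j, .inl l) = 0 := rfl
@[simp] theorem glueRmat_inrinrinlinr (i : Fin n) (k' : Fin n) (j : Fin m) (l : Fin n) :
    glueRmat q R R' (.inr i, .inr k') (.inl j, .inr l) = 0 := rfl
@[simp] theorem glueRmat_inrinrinrinl (i : Fin n) (k' : Fin n) (j : Fin n) (l : Fin m) :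
    glueRmat q R R' (.inr i, .inr k') (.inr j, .inl l) = 0 := rfl
@[simp] theorem glueRmat_inrinrinrinr (i : Fin n) (k' : Fin n) (j : Fin n) (l : Fin n) :
    glueRmat q R R' (.inr i, .inr k') (.inr j, .inr l) = R' (i, k') (j, l) := rfl

theorem uu_comm_vv (i j : Fin m) (a b : Fin n) :
    uu R R' i j * vv R R' a b = vv R R' a b * uu R R' i j := by
  simp [uu, vv, Algebra.TensorProduct.tmul_mul_tmul]

theorem rel_uu (i k' j l : Fin m) :
    ∑ a : Fin m, ∑ b : Fin m, R (i, k') (a, b) • (uu R R' a j * uu R R' b l)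
      = ∑ a : Fin m, ∑ b : Fin m, R (a, b) (j, l) • (uu R R' k' b * uu R R' i a) := by
  have h := congrArg (Algebra.TensorProduct.includeLeft
      (R := k) (S := k) (A := FRTAlg k R) (B := FRTAlg k R')) (frt_rel R i k' j l)
  simpa only [map_sum, map_smul, map_mul, Algebra.TensorProduct.includeLeft_apply, uu] using h

theorem rel_vv (i k' j l : Fin n) :
    ∑ a : Fin n, ∑ b : Fin n, R' (i, k') (a, b) • (vv R R' a j * vv R R' b l)
      = ∑ a : Fin n, ∑ b : Fin n, R' (a, b) (j, l) • (vv R R' k' b * vv R R' i a) := by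
  have h := congrArg (Algebra.TensorProduct.includeRight
      (R := k) (A := FRTAlg k R) (B := FRTAlg k R')) (frt_rel R' i k' j l)
  simpa only [map_sum, map_smul, map_mul, Algebra.TensorProduct.includeRight_apply, vv] using h

theorem glue_rel (I K' J L : Fin m ⊕ Fin n) :
    ∑ A : Fin m ⊕ Fin n, ∑ B : Fin m ⊕ Fin n,
        glueRmat q R R' (I, K') (A, B) • (phi R R' A J * phi R R' B L)
      = ∑ A : Fin m ⊕ Fin n, ∑ B : Fin m ⊕ Fin n,
        glueRmat q R R' (A, B) (J, L) • (phi R R' K' B * phi R R' I A) := by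
  obtain i | i := I <;> obtain k' | k' := K' <;> obtain j | j := J <;> obtain l | l := L <;>
    simp only [Fintype.sum_sum_type, glueRmat_inlinlinlinl, glueRmat_inlinlinlinr,
      glueRmat_inlinlinrinl, glueRmat_inlinlinrinr, glueRmat_inlinrinlinl,
      glueRmat_inlinrinlinr, glueRmat_inlinrinrinl, glueRmat_inlinrinrinr,
      glueRmat_inrinlinlinl, glueRmat_inrinlinlinr, glueRmat_inrinlinrinl,
      glueRmat_inrinlinrinr, glueRmat_inrinrinlinl, glueRmat_inrinrinlinr,
      glueRmat_inrinrinrinl, glueRmat_inrinrinrinr, phi_ll, phi_rr, phi_lr, phi_rl,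
      zero_smul, smul_zero, mul_zero, zero_mul, Finset.sum_const_zero, add_zero, zero_add,
      ite_smul, one_smul, ite_and, Finset.sum_ite_eq, Finset.sum_ite_eq',
      Finset.sum_ite_irrel, Finset.mem_univ, if_true]
  · exact rel_uu R R' i k' j l
  · exact uu_comm_vv R R' i j k' l
  · exact (uu_comm_vv R R' k' l i j).symm
  · exact rel_vv R R' i k' j l

noncomputable def glueHom :
    FRTAlg k (glueRmat q R R') →ₐ[k] FRTAlg k R ⊗[k] FRTAlg k R' :=
  frtLift (glueRmat q R R') (phi R R') (glue_rel q R R')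

theorem glueHom_gen (I J : Fin m ⊕ Fin n) :
    glueHom q R R' (frtGen k (glueRmat q R R') I J) = phi R R' I J :=
  frtLift_gen _ _ _ I J

noncomputable def leftHom : FRTAlg k R →ₐ[k] FRTAlg k (glueRmat q R R') :=
  frtLift R (fun i j => frtGen k (glueRmat q R R') (.inl i) (.inl j)) (by
    intro i k' j l
    have h := frt_rel (glueRmat q R R') (.inl i) (.inl k') (.inl j) (.inl l)
    simpa only [Fintype.sum_sum_type, glueRmat_inlinlinlinl, glueRmat_inlinlinlinr,
      glueRmat_inlinlinrinl, glueRmat_inlinlinrinr, glueRmat_inlinrinlinl,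
      glueRmat_inrinlinlinl, glueRmat_inrinrinlinl, glueRmat_inrinlinrinl,
      glueRmat_inlinrinrinl, glueRmat_inrinrinrinl, glueRmat_inrinlinlinr,
      glueRmat_inlinrinlinr, glueRmat_inrinrinlinr, glueRmat_inrinlinrinr,
      glueRmat_inlinrinrinr, zero_smul, Finset.sum_const_zero, add_zero, zero_add] using h)

theorem leftHom_gen (i j : Fin m) :
    leftHom q R R' (frtGen k R i j) = frtGen k (glueRmat q R R') (.inl i) (.inl j) :=
  frtLift_gen _ _ _ i j

noncomputable def rightHom : FRTAlg k R' →ₐ[k] FRTAlg k (glueRmat q R R') :=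
  frtLift R' (fun i j => frtGen k (glueRmat q R R') (.inr i) (.inr j)) (by
    intro i k' j l
    have h := frt_rel (glueRmat q R R') (.inr i) (.inr k') (.inr j) (.inr l)
    simpa only [Fintype.sum_sum_type, glueRmat_inlinlinlinl, glueRmat_inlinlinlinr,
      glueRmat_inlinlinrinl, glueRmat_inlinlinrinr, glueRmat_inlinrinlinl,
      glueRmat_inrinlinlinl, glueRmat_inrinrinlinl, glueRmat_inrinlinrinl,
      glueRmat_inlinrinrinl, glueRmat_inrinrinrinl, glueRmat_inrinlinlinr,
      glueRmat_inlinrinlinr, glueRmat_inrinrinlinr, glueRmat_inrinlinrinr,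
      glueRmat_inlinrinrinr, glueRmat_inrinrinrinr, zero_smul, Finset.sum_const_zero,
      add_zero, zero_add] using h)

theorem rightHom_gen (i j : Fin n) :
    rightHom q R R' (frtGen k R' i j) = frtGen k (glueRmat q R R') (.inr i) (.inr j) :=
  frtLift_gen _ _ _ i j

theorem glueHom_leftHom :
    (glueHom q R R').comp (leftHom q R R')
      = Algebra.TensorProduct.includeLeft (R := k) (S := k) :=
  frt_hom_ext R (fun i j => by
    simp [AlgHom.comp_apply, leftHom_gen, glueHom_gen, uu])

theorem glueHom_rightHom :
    (glueHom q R R').comp (rightHom q R R')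
      = Algebra.TensorProduct.includeRight (R := k) :=
  frt_hom_ext R' (fun i j => by
    simp [AlgHom.comp_apply, rightHom_gen, glueHom_gen, vv])

theorem glueHom_surjective : Function.Surjective (glueHom q R R') := by
  intro z
  suffices h : z ∈ (glueHom q R R').range from h
  induction z using TensorProduct.induction_on with
  | zero => exact zero_mem _
  | tmul x y =>
    have hx : x ⊗ₜ[k] (1 : FRTAlg k R') ∈ (glueHom q R R').range :=
      ⟨leftHom q R R' x, DFunLike.congr_fun (glueHom_leftHom q R R') x⟩
    have hy : (1 : FRTAlg k R) ⊗ₜ[k] y ∈ (glueHom q R R').range :=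
      ⟨rightHom q R R' y, DFunLike.congr_fun (glueHom_rightHom q R R') y⟩
    have hxy : x ⊗ₜ[k] y = (x ⊗ₜ[k] (1 : FRTAlg k R')) * ((1 : FRTAlg k R) ⊗ₜ[k] y) := by
      simp [Algebra.TensorProduct.tmul_mul_tmul]
    rw [hxy]
    exact mul_mem hx hy
  | add u v hu hv => exact add_mem hu hv

noncomputable def comul₂ :
    (FRTAlg k R ⊗[k] FRTAlg k R') →ₐ[k]
      ((FRTAlg k R ⊗[k] FRTAlg k R') ⊗[k] (FRTAlg k R ⊗[k] FRTAlg k R')) :=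
  (Algebra.TensorProduct.tensorTensorTensorComm k k k k (FRTAlg k R) (FRTAlg k R)
      (FRTAlg k R') (FRTAlg k R')).toAlgHom.comp
    (Algebra.TensorProduct.map (frtComul R) (frtComul R'))

theorem comul₂_uu (i j : Fin m) :
    comul₂ R R' (uu R R' i j) = ∑ a : Fin m, uu R R' i a ⊗ₜ[k] uu R R' a j := by
  simp [comul₂, uu, frtComul_gen, Algebra.TensorProduct.one_def,
    TensorProduct.sum_tmul, Algebra.TensorProduct.tensorTensorTensorComm_tmul]

theorem comul₂_vv (i j : Fin n) :
    comul₂ R R' (vv R R' i j) = ∑ a : Fin n, vv R R' i a ⊗ₜ[k] vv R R' a j := by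
  simp [comul₂, vv, frtComul_gen, Algebra.TensorProduct.one_def,
    TensorProduct.tmul_sum, Algebra.TensorProduct.tensorTensorTensorComm_tmul]

noncomputable def counit₂ : (FRTAlg k R ⊗[k] FRTAlg k R') →ₐ[k] k :=
  (Algebra.TensorProduct.lid k k).toAlgHom.comp
    (Algebra.TensorProduct.map (frtCounit R) (frtCounit R'))

theorem counit₂_uu (i j : Fin m) :
    counit₂ R R' (uu R R' i j) = if i = j then 1 else 0 := by
  simp [counit₂, uu, frtCounit_gen]

theorem counit₂_vv (i j : Fin n) :
    counit₂ R R' (vv R R' i j) = if i = j then 1 else 0 := by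
  simp [counit₂, vv, frtCounit_gen]

set_option maxHeartbeats 1000000 in
set_option synthInstance.maxHeartbeats 200000 in
theorem compat_comul :
    (Algebra.TensorProduct.map (glueHom q R R') (glueHom q R R')).comp
        (frtComul (glueRmat q R R'))
      = (comul₂ R R').comp (glueHom q R R') :=
  frt_hom_ext _ (fun I J => by
    rw [AlgHom.comp_apply, AlgHom.comp_apply, frtComul_gen, map_sum, glueHom_gen]
    obtain i | i := I <;> obtain j | j := J
    · rw [phi_ll, comul₂_uu]
      simp [Fintype.sum_sum_type, Algebra.TensorProduct.map_tmul, glueHom_gen]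
    · rw [phi_lr, map_zero]
      simp [Fintype.sum_sum_type, Algebra.TensorProduct.map_tmul, glueHom_gen]
    · rw [phi_rl, map_zero]
      simp [Fintype.sum_sum_type, Algebra.TensorProduct.map_tmul, glueHom_gen]
    · rw [phi_rr, comul₂_vv]
      simp [Fintype.sum_sum_type, Algebra.TensorProduct.map_tmul, glueHom_gen])

theorem compat_counit :
    (counit₂ R R').comp (glueHom q R R') = frtCounit (glueRmat q R R') :=
  frt_hom_ext _ (fun I J => by
    obtain i | i := I <;> obtain j | j := J <;>
      simp [glueHom_gen, frtCounit_gen, counit₂_uu, counit₂_vv])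

end Glue

end Stmt16Aux
/-- setting `b = c = 0` induces a well-defined bialgebra
surjection `A(R ⊕_q R') → A(R) ⊗ A(R')`, sending the diagonal blocks `a`, `d`
of the glued quantum matrix to the generators of `A(R)` and `A(R')`. -/
theorem stmt16 {k : Type*} [Field k] (q : k) (hq : q ≠ 0) {m n : ℕ}
    (R : Matrix ((Fin m) × (Fin m)) ((Fin m) × (Fin m)) k)
    (R' : Matrix ((Fin n) × (Fin n)) ((Fin n) × (Fin n)) k)
    (hR : IsHeckeYB q R) (hR' : IsHeckeYB q R') :
    let G := glueRmat q R R'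
    let t := frtGen k G
    let u : Fin m → Fin m → (FRTAlg k R ⊗[k] FRTAlg k R') :=
      fun i j => frtGen k R i j ⊗ₜ[k] 1
    let v : Fin n → Fin n → (FRTAlg k R ⊗[k] FRTAlg k R') :=
      fun i j => 1 ⊗ₜ[k] frtGen k R' i j
    ∃ (Δ₁ : FRTAlg k G →ₐ[k] (FRTAlg k G ⊗[k] FRTAlg k G))
      (ε₁ : FRTAlg k G →ₐ[k] k)
      (Δ₂ : (FRTAlg k R ⊗[k] FRTAlg k R') →ₐ[k]
        ((FRTAlg k R ⊗[k] FRTAlg k R') ⊗[k] (FRTAlg k R ⊗[k] FRTAlg k R')))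
      (ε₂ : (FRTAlg k R ⊗[k] FRTAlg k R') →ₐ[k] k)
      (f : FRTAlg k G →ₐ[k] (FRTAlg k R ⊗[k] FRTAlg k R')),
      (∀ I J, Δ₁ (t I J) = ∑ K : Fin m ⊕ Fin n, t I K ⊗ₜ[k] t K J) ∧
      (∀ I J, ε₁ (t I J) = if I = J then 1 else 0) ∧
      (∀ i j, Δ₂ (u i j) = ∑ a : Fin m, u i a ⊗ₜ[k] u a j) ∧
      (∀ i j, Δ₂ (v i j) = ∑ a : Fin n, v i a ⊗ₜ[k] v a j) ∧
      (∀ i j, ε₂ (u i j) = if i = j then 1 else 0) ∧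
      (∀ i j, ε₂ (v i j) = if i = j then 1 else 0) ∧
      Function.Surjective f ∧
      (∀ (i j : Fin m), f (t (Sum.inl i) (Sum.inl j)) = u i j) ∧
      (∀ (i j : Fin n), f (t (Sum.inr i) (Sum.inr j)) = v i j) ∧
      (∀ (i : Fin m) (j : Fin n), f (t (Sum.inl i) (Sum.inr j)) = 0) ∧
      (∀ (i : Fin n) (j : Fin m), f (t (Sum.inr i) (Sum.inl j)) = 0) ∧
      (Algebra.TensorProduct.map f f).comp Δ₁ = Δ₂.comp f ∧
      ε₂.comp f = ε₁ := by
  intro G t u v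
  exact ⟨Stmt16Aux.frtComul G, Stmt16Aux.frtCounit G, Stmt16Aux.comul₂ R R',
    Stmt16Aux.counit₂ R R', Stmt16Aux.glueHom q R R',
    fun I J => Stmt16Aux.frtComul_gen G I J,
    fun I J => Stmt16Aux.frtCounit_gen G I J,
    fun i j => Stmt16Aux.comul₂_uu R R' i j,
    fun i j => Stmt16Aux.comul₂_vv R R' i j,
    fun i j => Stmt16Aux.counit₂_uu R R' i j,
    fun i j => Stmt16Aux.counit₂_vv R R' i j,
    Stmt16Aux.glueHom_surjective q R R',
    fun i j => Stmt16Aux.glueHom_gen q R R' (Sum.inl i) (Sum.inl j),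
    fun i j => Stmt16Aux.glueHom_gen q R R' (Sum.inr i) (Sum.inr j),
    fun i j => Stmt16Aux.glueHom_gen q R R' (Sum.inl i) (Sum.inr j),
    fun i j => Stmt16Aux.glueHom_gen q R R' (Sum.inr i) (Sum.inl j),
    Stmt16Aux.compat_comul q R R',
    Stmt16Aux.compat_counit q R R'⟩
end
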